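/- Let q, d, D be positive integers with q ≥ d+1 and D ≤ d. Let z = (z_1,…,z_q) be a probability vector with 0 ≤ z_j ≤ 1/(q−d) for all j. Then ∑_{j=1}^q (1 − z_j)^D ≤ d + (q−d)(1 − 1/(q−d))^D. -/

import Mathlib

/-- If `q ≥ d+1`, `1 ≤ D ≤ d`, and `z` is a probability vector with
`0 ≤ z_j ≤ 1/(q−d)`, then `∑_j (1 − z_j)^D ≤ d + (q−d)(1 − 1/(q−d))^D`. -/
theorem stmt5 (q d D : ℕ) (hq : d + 1 ≤ q) (hD1 : 1 ≤ D) (hDd : D ≤ d)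
    (z : Fin q → ℝ)
    (hz0 : ∀ j, 0 ≤ z j) (hzU : ∀ j, z j ≤ 1 / ((q : ℝ) - d))
    (hz1 : ∑ j, z j = 1) :
    ∑ j, (1 - z j) ^ D ≤ (d : ℝ) + ((q : ℝ) - d) * (1 - 1 / ((q : ℝ) - d)) ^ D := by
  set c : ℝ := (q : ℝ) - d with hcdef
  have hc1 : (1 : ℝ) ≤ c := by
    have : (d : ℝ) + 1 ≤ (q : ℝ) := by exact_mod_cast hq
    simp [hcdef]; linarith
  have hc0 : (0 : ℝ) < c := lt_of_lt_of_le one_pos hc1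
  have hu1 : (0 : ℝ) ≤ 1 - 1 / c := by
    have : 1 / c ≤ 1 := by
      rw [div_le_one hc0]; exact hc1
    linarith
  -- chord bound per coordinate
  have key : ∀ j, (1 - z j) ^ D ≤ (1 - c * z j) * 1 + c * z j * (1 - 1 / c) ^ D := by
    intro j
    have ht0 : 0 ≤ c * z j := mul_nonneg hc0.le (hz0 j)
    have ht1 : c * z j ≤ 1 := by
      have := hzU j
      calc c * z j ≤ c * (1 / c) := by
            exact mul_le_mul_of_nonneg_left this hc0.le
        _ = 1 := by field_simp
    have h := (convexOn_pow (𝕜 := ℝ) D).2 (Set.mem_Ici.mpr (by norm_num : (0:ℝ) ≤ 1))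
      (Set.mem_Ici.mpr hu1) (by linarith : 0 ≤ 1 - c * z j) ht0 (by ring)
    have heq : (1 - c * z j) • (1:ℝ) + (c * z j) • (1 - 1 / c) = 1 - z j := by
      field_simp
      linear_combination (c * z j - z j) * mul_inv_cancel₀ hc0.ne'
    rw [heq] at h
    simpa [smul_eq_mul, one_pow] using h
  calc ∑ j, (1 - z j) ^ D
      ≤ ∑ j, ((1 - c * z j) * 1 + c * z j * (1 - 1 / c) ^ D) :=
        Finset.sum_le_sum fun j _ => key j
    _ = (q : ℝ) - c * (∑ j, z j) + c * (∑ j, z j) * (1 - 1 / c) ^ D := by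
        rw [Finset.sum_add_distrib]
        simp only [mul_one]
        rw [Finset.sum_sub_distrib, ← Finset.sum_mul, ← Finset.mul_sum]
        simp
    _ = (d : ℝ) + c * (1 - 1 / c) ^ D := by rw [hz1]; simp only [hcdef]; ring
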